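/- For any tuple (Q₀,…,Q_{|𝒴|−1}) ∈ 𝒬ₙ^{|𝒴|}, the compatible hyperedge e(Q₀,…,Q_{|𝒴|−1}) is a solvable hyperedge for (S,f); furthermore, there exists a maximal solvable hyperedge ẽ ∈ ℰ(S,f) with e(Q₀,…,Q_{|𝒴|−1}) ⊆ ẽ. -/

import Mathlib

/-!
STATEMENT 9: For any tuple `(Q₀,…,Q_{|𝒴|−1}) ∈ 𝒬ₙ^{|𝒴|}`, the compatible
hyperedge `e(Q₀,…,Q_{|𝒴|−1})` is a solvable hyperedge for `(S,f)`, and it is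
contained in some maximal solvable hyperedge `ẽ ∈ ℰ(S,f)`.

Types in `𝒬ₙ = 𝒫ₙ(𝒱)` are encoded by count functions `V → ℕ` summing to `n`;
a tuple of types indexed by 𝒴 is a function `Q : Y → V → ℕ`.
-/

open Finset

namespace Stmt9

/-- `a ∈ 𝒳` is compatible with the tuple of types `Q` (given as counts). -/
def Compatible {X Y V : Type} [DecidableEq V] (S : Set (X × Y)) (f : X → Y → V)
    (Q : Y → V → ℕ) (a : X) : Prop :=
  ∀ b₁ b₂ : Y, (a, b₁) ∈ S → (a, b₂) ∈ S → ∀ v : V,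
    (Q b₁ v : ℤ) - (Q b₂ v : ℤ)
      = (if f a b₁ = v then 1 else 0) - (if f a b₂ = v then 1 else 0)

/-- The compatible hyperedge `e(Q₀,…,Q_{|𝒴|−1})`. -/
def compatEdge {X Y V : Type} [DecidableEq V] (S : Set (X × Y)) (f : X → Y → V)
    (Q : Y → V → ℕ) : Set X :=
  {a | Compatible S f Q a}

/-- The balanced condition `|I₊(v)| = |I₋(v)|` for a simple loop. -/
def Balanced {X Y V : Type} (f : X → Y → V) {m : ℕ}
    (a : ZMod m → X) (b : ZMod m → Y) : Prop :=
  ∀ v : V, {i : ZMod m | f (a i) (b i) = v}.ncard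
    = {i : ZMod m | f (a i) (b (i + 1)) = v}.ncard

/-- `A × B` is solvable for `(S, f)`: every simple loop of `A × B` contained in
`S` is balanced. -/
def Solvable {X Y V : Type} (S : Set (X × Y)) (f : X → Y → V)
    (A : Set X) (B : Set Y) : Prop :=
  ∀ (m : ℕ), 2 ≤ m → ∀ (a : ZMod m → X) (b : ZMod m → Y),
    Function.Injective a → Function.Injective b →
    (∀ i, a i ∈ A) → (∀ i, b i ∈ B) →
    (∀ i, (a i, b i) ∈ S) → (∀ i, (a i, b (i + 1)) ∈ S) →
    Balanced f a b

/-- `e ⊆ 𝒳` is a solvable hyperedge if `e × 𝒴` is solvable for `(S,f)`. -/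
def SolvableEdge {X Y V : Type} (S : Set (X × Y)) (f : X → Y → V)
    (e : Set X) : Prop :=
  Solvable S f e Set.univ

theorem compatEdge_solvable_and_subset_maximal
    {X Y V : Type} [Fintype X] [Fintype V] [DecidableEq V]
    (S : Set (X × Y)) (f : X → Y → V)
    {n : ℕ} (Q : Y → V → ℕ) (hQtype : ∀ b, ∑ v : V, Q b v = n) :
    SolvableEdge S f (compatEdge S f Q) ∧
    ∃ e : Set X,
      (SolvableEdge S f e ∧
        ∀ e' : Set X, SolvableEdge S f e' → e ⊆ e' → e' = e) ∧
      compatEdge S f Q ⊆ e := by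
  classical
  have hsolv : SolvableEdge S f (compatEdge S f Q) := by
    intro m hm a b ha hb haA hbB hS1 hS2
    haveI : NeZero m := ⟨by omega⟩
    intro v
    -- key sum identity over ℤ
    have h1 : ∑ i : ZMod m, ((Q (b i) v : ℤ) - (Q (b (i+1)) v : ℤ))
        = ∑ i : ZMod m, ((if f (a i) (b i) = v then (1:ℤ) else 0)
            - (if f (a i) (b (i+1)) = v then (1:ℤ) else 0)) := by
      refine Finset.sum_congr rfl fun i _ => ?_
      exact haA i (b i) (b (i+1)) (hS1 i) (hS2 i) v
    have h2 : ∑ i : ZMod m, ((Q (b i) v : ℤ) - (Q (b (i+1)) v : ℤ)) = 0 := by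
      rw [Finset.sum_sub_distrib]
      have := Fintype.sum_equiv (Equiv.addRight (1 : ZMod m))
        (fun i => (Q (b (i+1)) v : ℤ)) (fun i => (Q (b i) v : ℤ)) (fun i => rfl)
      rw [this, sub_self]
    rw [h1, Finset.sum_sub_distrib] at h2
    have h3 : ∑ i : ZMod m, (if f (a i) (b i) = v then (1:ℤ) else 0)
        = ∑ i : ZMod m, (if f (a i) (b (i+1)) = v then (1:ℤ) else 0) := by
      linarith [h2]
    have hcard : (Finset.univ.filter fun i : ZMod m => f (a i) (b i) = v).card
        = (Finset.univ.filter fun i : ZMod m => f (a i) (b (i+1)) = v).card := by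
      have e1 : ((Finset.univ.filter fun i : ZMod m => f (a i) (b i) = v).card : ℤ)
          = ∑ i : ZMod m, (if f (a i) (b i) = v then (1:ℤ) else 0) := by
        rw [Finset.card_filter, Nat.cast_sum]
        exact Finset.sum_congr rfl fun i _ => by split <;> simp
      have e2 : ((Finset.univ.filter fun i : ZMod m => f (a i) (b (i+1)) = v).card : ℤ)
          = ∑ i : ZMod m, (if f (a i) (b (i+1)) = v then (1:ℤ) else 0) := by
        rw [Finset.card_filter, Nat.cast_sum]
        exact Finset.sum_congr rfl fun i _ => by split <;> simp
      exact_mod_cast e1.trans (h3.trans e2.symm)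
    rw [Set.ncard_eq_toFinset_card', Set.ncard_eq_toFinset_card',
      Set.toFinset_setOf, Set.toFinset_setOf]
    exact hcard
  refine ⟨hsolv, ?_⟩
  -- maximal solvable edge containing compatEdge, by finiteness
  set s : Set (Set X) := {e | SolvableEdge S f e ∧ compatEdge S f Q ⊆ e} with hs
  have hfin : s.Finite := Set.toFinite s
  have hne : s.Nonempty := ⟨compatEdge S f Q, hsolv, subset_refl _⟩
  obtain ⟨e, he, hemax⟩ := Set.Finite.exists_maximal hfin hne
  refine ⟨e, ⟨he.1, ?_⟩, he.2⟩
  intro e' he' hee'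
  have he's : e' ∈ s := ⟨he', he.2.trans hee'⟩
  exact le_antisymm (hemax he's hee') hee'

end Stmt9
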